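/- Let d ≥ 1 and x ∈ ℝ^d. Let K : ℝ^d → ℝ be an integrable function with compact support such that ∫_{ℝ^d} K(u) λ(du) = 1 and ∫_{ℝ^d} u_i K(u) λ(du) = 0 for every coordinate i ∈ {1, …, d}. Let f : ℝ^d → ℝ be measurable, and suppose f is twice continuously differentiable on an open neighborhood U of x with all second-order partial derivatives bounded in absolute value by M on U. Then there exist constants C ≥ 0 and a₀ > 0 such that for all 0 < a < a₀: | a^{−d} ∫_{ℝ^d} K( (x − u)/a ) f(u) λ(du) − f(x) | ≤ C a². -/

import Mathlib

open MeasureTheory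

set_option maxHeartbeats 2000000 in
/-- Kernel bias bound: for an integrable, compactly supported kernel `K` on `ℝ^d` with
`∫ K = 1` and vanishing first moments `∫ uᵢ K(u) du = 0`, and `f` measurable and `C²` on a
neighborhood `U` of `x` with second derivative bounded by `M` there, the smoothing bias
satisfies `|a^{−d} ∫ K((x−u)/a) f(u) du − f(x)| ≤ C a²` for all sufficiently small `a > 0`. -/
theorem kernel_bias_bound (d : ℕ) (hd : 1 ≤ d)
    (x : EuclideanSpace ℝ (Fin d))
    (K : EuclideanSpace ℝ (Fin d) → ℝ)
    (hKint : Integrable K) (hKsupp : HasCompactSupport K)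
    (hKone : ∫ u, K u = 1)
    (hKmom : ∀ i : Fin d, ∫ u : EuclideanSpace ℝ (Fin d), u i * K u = 0)
    (f : EuclideanSpace ℝ (Fin d) → ℝ) (hfmeas : Measurable f)
    (U : Set (EuclideanSpace ℝ (Fin d))) (hU : IsOpen U) (hxU : x ∈ U)
    (hf : ContDiffOn ℝ 2 f U)
    (M : ℝ) (hM : ∀ u ∈ U, ‖iteratedFDerivWithin ℝ 2 f U u‖ ≤ M) :
    ∃ C : ℝ, 0 ≤ C ∧ ∃ a₀ : ℝ, 0 < a₀ ∧ ∀ a : ℝ, 0 < a → a < a₀ →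
      |(a ^ d)⁻¹ * (∫ u, K (a⁻¹ • (x - u)) * f u) - f x| ≤ C * a ^ 2 := by
  -- neighborhood radius
  obtain ⟨r, hr, hball⟩ := Metric.isOpen_iff.1 hU x hxU
  set ρ : ℝ := r / 2 with hρdef
  have hρ : 0 < ρ := by positivity
  have hρU : Metric.closedBall x ρ ⊆ U :=
    (Metric.closedBall_subset_ball (by rw [hρdef]; linarith)).trans hball
  -- support radius
  obtain ⟨R₀, hR₀⟩ := hKsupp.isBounded.subset_closedBall 0
  set R : ℝ := max R₀ 1 with hRdef
  have hR1 : (1:ℝ) ≤ R := le_max_right _ _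
  have hRpos : (0:ℝ) < R := lt_of_lt_of_le one_pos hR1
  have hKR : ∀ v : EuclideanSpace ℝ (Fin d), K v ≠ 0 → ‖v‖ ≤ R := by
    intro v hv
    have : v ∈ Metric.closedBall 0 R₀ := hR₀ (subset_tsupport K hv)
    rw [Metric.mem_closedBall, dist_zero_right] at this
    exact this.trans (le_max_left _ _)
  -- bound of f on the closed ball
  obtain ⟨Cf, hCf⟩ := (isCompact_closedBall x ρ).exists_bound_of_continuousOn
    (hf.continuousOn.mono hρU)
  -- basic facts
  have hM0 : 0 ≤ M := (norm_nonneg _).trans (hM x hxU)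
  set L := fderiv ℝ f x with hLdef
  have hMnorm : ∀ z ∈ U, ‖iteratedFDeriv ℝ 2 f z‖ ≤ M := fun z hz => by
    rw [← iteratedFDerivWithin_of_isOpen 2 hU hz]; exact hM z hz
  have hdiff : ∀ z ∈ U, DifferentiableAt ℝ f z := fun z hz =>
    ((hf.differentiableOn (by norm_num)) z hz).differentiableAt (hU.mem_nhds hz)
  -- the derivative `g := iteratedFDeriv 1 f` is differentiable on U with derivative ≤ M
  set g := iteratedFDeriv ℝ 1 f with hgdef
  have hgdiff : ∀ z ∈ U, DifferentiableAt ℝ g z := by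
    intro z hz
    have h1 : DifferentiableOn ℝ (iteratedFDerivWithin ℝ 1 f U) U :=
      hf.differentiableOn_iteratedFDerivWithin (by norm_num) hU.uniqueDiffOn
    have h2 : DifferentiableAt ℝ (iteratedFDerivWithin ℝ 1 f U) z :=
      (h1 z hz).differentiableAt (hU.mem_nhds hz)
    have hEq : iteratedFDerivWithin ℝ 1 f U =ᶠ[nhds z] g :=
      Filter.eventuallyEq_of_mem (hU.mem_nhds hz)
        (fun w hw => iteratedFDerivWithin_of_isOpen 1 hU hw)
    exact hEq.differentiableAt_iff.1 h2
  have hgnorm : ∀ z ∈ U, ‖fderiv ℝ g z‖ ≤ M := fun z hz => by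
    rw [hgdef, norm_fderiv_iteratedFDeriv]; exact hMnorm z hz
  have hcurry : ∀ z : EuclideanSpace ℝ (Fin d), g z = (continuousMultilinearCurryFin1 ℝ (EuclideanSpace ℝ (Fin d)) ℝ).symm (fderiv ℝ f z) := by
    intro z; ext m; simp [hgdef, iteratedFDeriv_one_apply]
  -- Lipschitz bound for the derivative on the closed ball
  have lip : ∀ z ∈ Metric.closedBall x ρ, ‖fderiv ℝ f z - L‖ ≤ M * ‖z - x‖ := by
    intro z hz
    have hx' : x ∈ Metric.closedBall x ρ := Metric.mem_closedBall_self hρ.le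
    have hmvt := Convex.norm_image_sub_le_of_norm_hasFDerivWithin_le
      (f := g) (f' := fun w => fderiv ℝ g w) (s := Metric.closedBall x ρ) (C := M)
      (fun w hw => ((hgdiff w (hρU hw)).hasFDerivAt).hasFDerivWithinAt)
      (fun w hw => hgnorm w (hρU hw)) (convex_closedBall x ρ) hx' hz
    have hiso : ‖g z - g x‖ = ‖fderiv ℝ f z - L‖ := by
      rw [hcurry z, hcurry x, ← map_sub, hLdef, LinearIsometryEquiv.norm_map]
    rwa [hiso] at hmvt
  -- Taylor estimate
  have taylor : ∀ y : EuclideanSpace ℝ (Fin d), ‖y - x‖ ≤ ρ →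
      ‖f y - f x - L (y - x)‖ ≤ M * ‖y - x‖ * ‖y - x‖ := by
    intro y hy
    have hs_sub : Metric.closedBall x ‖y - x‖ ⊆ Metric.closedBall x ρ :=
      Metric.closedBall_subset_closedBall hy
    have hxs : x ∈ Metric.closedBall x ‖y - x‖ := Metric.mem_closedBall_self (norm_nonneg _)
    have hys : y ∈ Metric.closedBall x ‖y - x‖ := by
      simp [Metric.mem_closedBall, dist_eq_norm]
    have := Convex.norm_image_sub_le_of_norm_hasFDerivWithin_le'
      (f := f) (f' := fun w => fderiv ℝ f w) (φ := L)
      (s := Metric.closedBall x ‖y - x‖) (C := M * ‖y - x‖)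
      (fun z hz => ((hdiff z (hρU (hs_sub hz))).hasFDerivAt).hasFDerivWithinAt)
      (fun z hz => by
        refine (lip z (hs_sub hz)).trans ?_
        have hz' : ‖z - x‖ ≤ ‖y - x‖ := by
          rw [Metric.mem_closedBall, dist_eq_norm] at hz; exact hz
        exact mul_le_mul_of_nonneg_left hz' hM0)
      (convex_closedBall _ _) hxs hys
    exact this
  -- integrability of coordinate moments
  have Inti : ∀ i : Fin d, Integrable (fun v : EuclideanSpace ℝ (Fin d) => v i * K v) := by
    intro i
    refine Integrable.mono' (hKint.norm.const_mul R)
      (((EuclideanSpace.proj i : EuclideanSpace ℝ (Fin d) →L[ℝ] ℝ).continuous.aestronglyMeasurable).mul hKint.1)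
      (Filter.Eventually.of_forall ?_)
    intro v
    rcases eq_or_ne (K v) 0 with h | h
    · simp [h, mul_nonneg hRpos.le (norm_nonneg _)]
    · have h1 : |v i| ≤ ‖v‖ := by
        rw [EuclideanSpace.norm_eq, ← Real.sqrt_sq_eq_abs]
        apply Real.sqrt_le_sqrt
        have := Finset.single_le_sum (f := fun j => ‖v j‖^2)
          (fun j _ => by positivity) (Finset.mem_univ i)
        simpa [Real.norm_eq_abs, sq_abs] using this
      have h2 : ‖v‖ ≤ R := hKR v h
      calc ‖v i * K v‖ = |v i| * ‖K v‖ := by rw [norm_mul]; rfl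
        _ ≤ R * ‖K v‖ := by
            exact mul_le_mul_of_nonneg_right (h1.trans h2) (norm_nonneg _)
  -- vanishing first moment of L against K
  have hKL : Integrable (fun v : EuclideanSpace ℝ (Fin d) => K v * L v) := by
    refine Integrable.mono' (hKint.norm.const_mul (‖L‖ * R))
      (hKint.1.mul (L.continuous.aestronglyMeasurable))
      (Filter.Eventually.of_forall ?_)
    intro v
    rcases eq_or_ne (K v) 0 with h | h
    · simp [h, mul_nonneg (mul_nonneg (norm_nonneg _) hRpos.le) (norm_nonneg _)]
    · calc ‖K v * L v‖ = ‖L v‖ * ‖K v‖ := by rw [norm_mul, mul_comm]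
        _ ≤ (‖L‖ * R) * ‖K v‖ := by
            refine mul_le_mul_of_nonneg_right ?_ (norm_nonneg _)
            exact (L.le_opNorm v).trans
              (mul_le_mul_of_nonneg_left (hKR v h) (norm_nonneg _))
  have hmomL : (∫ v : EuclideanSpace ℝ (Fin d), K v * L v) = 0 := by
    have hLrepr : ∀ v : EuclideanSpace ℝ (Fin d), L v = ∑ i, v i * L (EuclideanSpace.single i (1:ℝ)) := by
      intro v
      conv_lhs => rw [← (EuclideanSpace.basisFun (Fin d) ℝ).sum_repr v]
      rw [map_sum]
      refine Finset.sum_congr rfl fun i _ => ?_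
      simp [EuclideanSpace.basisFun_repr, EuclideanSpace.basisFun_apply, smul_eq_mul]
    calc (∫ v : EuclideanSpace ℝ (Fin d), K v * L v)
        = ∫ v : EuclideanSpace ℝ (Fin d), ∑ i, L (EuclideanSpace.single i (1:ℝ)) * (v i * K v) := by
          refine integral_congr_ae (Filter.Eventually.of_forall fun v => ?_)
          dsimp only
          rw [hLrepr v, Finset.mul_sum]
          refine Finset.sum_congr rfl fun i _ => by ring
      _ = ∑ i, ∫ v : EuclideanSpace ℝ (Fin d), L (EuclideanSpace.single i (1:ℝ)) * (v i * K v) :=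
          integral_finset_sum _ (fun i _ => (Inti i).const_mul _)
      _ = ∑ i, L (EuclideanSpace.single i (1:ℝ)) * ∫ v : EuclideanSpace ℝ (Fin d), v i * K v := by
          refine Finset.sum_congr rfl fun i _ => integral_const_mul _ _
      _ = 0 := by simp [hKmom]
  -- the constant
  refine ⟨M * R ^ 2 * (∫ v : EuclideanSpace ℝ (Fin d), ‖K v‖), by positivity, ρ / R, by positivity, ?_⟩
  intro a ha₁ ha₂
  have haR : a * R < ρ := (lt_div_iff₀ hRpos).1 ha₂
  have hadne : (a : ℝ) ^ d ≠ 0 := pow_ne_zero d ha₁.ne'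
  -- change of variables
  have key : (∫ u, K (a⁻¹ • (x - u)) * f u) = a ^ d * ∫ v : EuclideanSpace ℝ (Fin d), K v * f (x - a • v) := by
    have h1 : (∫ u, K (a⁻¹ • (x - u)) * f u) = ∫ w : EuclideanSpace ℝ (Fin d), K (a⁻¹ • w) * f (x - w) := by
      have := integral_sub_left_eq_self (fun w : EuclideanSpace ℝ (Fin d) => K (a⁻¹ • w) * f (x - w)) volume x
      simpa [sub_sub_cancel] using this
    have h2 : (∫ v : EuclideanSpace ℝ (Fin d), K v * f (x - a • v))
        = |(a ^ d)⁻¹| • ∫ w : EuclideanSpace ℝ (Fin d), K (a⁻¹ • w) * f (x - w) := by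
      have := MeasureTheory.Measure.integral_comp_smul volume
        (fun w : EuclideanSpace ℝ (Fin d) => K (a⁻¹ • w) * f (x - w)) a
      rw [finrank_euclideanSpace_fin] at this
      simpa [smul_smul, inv_mul_cancel₀ ha₁.ne'] using this
    rw [h1]
    rw [h2, abs_of_nonneg (inv_nonneg.2 (pow_nonneg ha₁.le d)), smul_eq_mul]
    field_simp
  -- properties of points in the support
  have hsupp : ∀ v : EuclideanSpace ℝ (Fin d), K v ≠ 0 → ‖x - a • v - x‖ ≤ a * R := by
    intro v hv
    have : ‖x - a • v - x‖ = a * ‖v‖ := by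
      rw [sub_sub_cancel_left, norm_neg, norm_smul, Real.norm_eq_abs, abs_of_pos ha₁]
    rw [this]
    exact mul_le_mul_of_nonneg_left (hKR v hv) ha₁.le
  -- integrability of the main integrand
  have hmeas_f : AEStronglyMeasurable (fun v : EuclideanSpace ℝ (Fin d) => f (x - a • v)) volume :=
    (hfmeas.comp ((continuous_const.sub (continuous_const_smul a)).measurable)).aestronglyMeasurable
  have hCf0 : 0 ≤ Cf := (norm_nonneg _).trans (hCf x (Metric.mem_closedBall_self hρ.le))
  have hJ1 : Integrable (fun v : EuclideanSpace ℝ (Fin d) => K v * f (x - a • v)) := by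
    refine Integrable.mono' (hKint.norm.const_mul Cf) (hKint.1.mul hmeas_f)
      (Filter.Eventually.of_forall ?_)
    intro v
    rcases eq_or_ne (K v) 0 with h | h
    · simp [h, mul_nonneg hCf0 (norm_nonneg _)]
    · have hmem : x - a • v ∈ Metric.closedBall x ρ := by
        rw [Metric.mem_closedBall, dist_eq_norm]
        exact (hsupp v h).trans haR.le
      calc ‖K v * f (x - a • v)‖ = ‖f (x - a • v)‖ * ‖K v‖ := by rw [norm_mul, mul_comm]
        _ ≤ Cf * ‖K v‖ := mul_le_mul_of_nonneg_right (hCf _ hmem) (norm_nonneg _)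
  -- the error function
  set Err : EuclideanSpace ℝ (Fin d) → ℝ := fun v => f (x - a • v) - f x - L (x - a • v - x) with hErrdef
  have hLlin : ∀ v : EuclideanSpace ℝ (Fin d), L (x - a • v - x) = (-a) * (L v) := by
    intro v
    rw [sub_sub_cancel_left, map_neg, _root_.map_smul, smul_eq_mul]
    ring
  have hsplit : (∫ v : EuclideanSpace ℝ (Fin d), K v * f (x - a • v)) - f x = ∫ v : EuclideanSpace ℝ (Fin d), K v * Err v := by
    have e1 : (fun v : EuclideanSpace ℝ (Fin d) => K v * Err v)
        = fun v : EuclideanSpace ℝ (Fin d) => (K v * f (x - a • v) - K v * f x) - (-a) * (K v * L v) := by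
      funext v
      rw [hErrdef]
      simp only [hLlin v]
      ring
    have hA : Integrable (fun v : EuclideanSpace ℝ (Fin d) => K v * f (x - a • v) - K v * f x) :=
      hJ1.sub (hKint.mul_const (f x))
    have hB : Integrable (fun v : EuclideanSpace ℝ (Fin d) => (-a) * (K v * L v)) :=
      hKL.const_mul (-a)
    have e2 : (∫ v : EuclideanSpace ℝ (Fin d), K v * Err v)
        = (∫ v : EuclideanSpace ℝ (Fin d), (K v * f (x - a • v) - K v * f x))
          - ∫ v : EuclideanSpace ℝ (Fin d), (-a) * (K v * L v) := by
      rw [e1]; exact integral_sub hA hB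
    have e3 : (∫ v : EuclideanSpace ℝ (Fin d), (K v * f (x - a • v) - K v * f x))
        = (∫ v : EuclideanSpace ℝ (Fin d), K v * f (x - a • v))
          - ∫ v : EuclideanSpace ℝ (Fin d), K v * f x :=
      integral_sub hJ1 (hKint.mul_const (f x))
    have e4 : (∫ v : EuclideanSpace ℝ (Fin d), K v * f x) = f x := by
      rw [integral_mul_const, hKone, one_mul]
    have e5 : (∫ v : EuclideanSpace ℝ (Fin d), (-a) * (K v * L v)) = 0 := by
      rw [integral_const_mul, hmomL, mul_zero]
    rw [e2, e3, e4, e5]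
    ring
  -- final bound
  have hbound : |∫ v : EuclideanSpace ℝ (Fin d), K v * Err v| ≤ M * (a * R) ^ 2 * ∫ v : EuclideanSpace ℝ (Fin d), ‖K v‖ := by
    calc |∫ v : EuclideanSpace ℝ (Fin d), K v * Err v|
          = ‖∫ v : EuclideanSpace ℝ (Fin d), K v * Err v‖ := (Real.norm_eq_abs _).symm
      _ ≤ ∫ v : EuclideanSpace ℝ (Fin d), ‖K v * Err v‖ := norm_integral_le_integral_norm _
      _ ≤ ∫ v : EuclideanSpace ℝ (Fin d), M * (a * R) ^ 2 * ‖K v‖ := by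
          refine integral_mono_of_nonneg (Filter.Eventually.of_forall fun v => norm_nonneg _)
            (hKint.norm.const_mul _) (Filter.Eventually.of_forall ?_)
          intro v
          rcases eq_or_ne (K v) 0 with h | h
          · simp [h]
          · have h1 : ‖x - a • v - x‖ ≤ a * R := hsupp v h
            have h2 : ‖Err v‖ ≤ M * (a * R) ^ 2 := by
              have ht := taylor (x - a • v) (h1.trans haR.le)
              refine ht.trans ?_
              have h0 : (0:ℝ) ≤ ‖x - a • v - x‖ := norm_nonneg _
              have h3 : ‖x - a • v - x‖ * ‖x - a • v - x‖ ≤ (a * R) * (a * R) :=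
                mul_le_mul h1 h1 h0 (h0.trans h1)
              calc M * ‖x - a • v - x‖ * ‖x - a • v - x‖
                  = M * (‖x - a • v - x‖ * ‖x - a • v - x‖) := by ring
                _ ≤ M * ((a * R) * (a * R)) := mul_le_mul_of_nonneg_left h3 hM0
                _ = M * (a * R) ^ 2 := by ring
            calc ‖K v * Err v‖ = ‖Err v‖ * ‖K v‖ := by rw [norm_mul, mul_comm]
              _ ≤ M * (a * R) ^ 2 * ‖K v‖ :=
                  mul_le_mul_of_nonneg_right h2 (norm_nonneg _)
      _ = M * (a * R) ^ 2 * ∫ v : EuclideanSpace ℝ (Fin d), ‖K v‖ := integral_const_mul _ _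
  have hgoal : (a ^ d)⁻¹ * (∫ u, K (a⁻¹ • (x - u)) * f u) - f x = ∫ v : EuclideanSpace ℝ (Fin d), K v * Err v := by
    rw [key, ← mul_assoc, inv_mul_cancel₀ hadne, one_mul]
    exact hsplit
  rw [hgoal]
  refine hbound.trans (le_of_eq ?_)
  ring
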